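/- Let w⁻_1, w⁻_2, w⁻_3 ∈ [0,1], set w⁺_e = 1 − w⁻_e and f⁻_e = w⁻_e, f⁺_e = 1 − f⁻_e for e = 1,2,3. For every (x_1, x_2, x_3) ∈ L = {(0,0,0),(1,1,0),(1,0,1),(0,1,1),(1,1,1)}, the quantity ψ = (f⁺_3 f⁺_2 + f⁺_3 f⁻_2 + f⁻_3 f⁺_2)(x_1 w⁺_1 + (1 − x_1) w⁻_1) + (f⁺_1 f⁺_3 + f⁺_1 f⁻_3 + f⁻_1 f⁺_3)(x_2 w⁺_2 + (1 − x_2) w⁻_2) + (f⁺_2 f⁺_1 + f⁺_2 f⁻_1 + f⁻_2 f⁺_1)(x_3 w⁺_3 + (1 − x_3) w⁻_3) satisfies ψ ≥ w⁻_1 w⁺_2 w⁺_3 + w⁺_1 w⁻_2 w⁺_3 + w⁺_1 w⁺_2 w⁻_3. -/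
import Mathlib


/-- With `w⁺ₑ = 1 − w⁻ₑ`, `f⁻ₑ = w⁻ₑ`, `f⁺ₑ = 1 − f⁻ₑ`, for every
`(x₁,x₂,x₃)` in `L = {(0,0,0),(1,1,0),(1,0,1),(0,1,1),(1,1,1)}`, the per-triple
LP coefficient `ψ` is at least `w⁻₁ w⁺₂ w⁺₃ + w⁺₁ w⁻₂ w⁺₃ + w⁺₁ w⁺₂ w⁻₃`. -/
theorem psi_ge_prob (w1 w2 w3 x1 x2 x3 : ℝ)
    (hw1 : w1 ∈ Set.Icc (0:ℝ) 1) (hw2 : w2 ∈ Set.Icc (0:ℝ) 1)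
    (hw3 : w3 ∈ Set.Icc (0:ℝ) 1)
    (hx : (x1, x2, x3) ∈
      ({(0,0,0), (1,1,0), (1,0,1), (0,1,1), (1,1,1)} : Set (ℝ × ℝ × ℝ))) :
    ((1 - w3) * (1 - w2) + (1 - w3) * w2 + w3 * (1 - w2)) *
        (x1 * (1 - w1) + (1 - x1) * w1) +
    ((1 - w1) * (1 - w3) + (1 - w1) * w3 + w1 * (1 - w3)) *
        (x2 * (1 - w2) + (1 - x2) * w2) +
    ((1 - w2) * (1 - w1) + (1 - w2) * w1 + w2 * (1 - w1)) *
        (x3 * (1 - w3) + (1 - x3) * w3) ≥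
    w1 * (1 - w2) * (1 - w3) + (1 - w1) * w2 * (1 - w3) +
      (1 - w1) * (1 - w2) * w3 := by
  obtain ⟨h1,h2⟩ := hw1
  obtain ⟨h3,h4⟩ := hw2
  obtain ⟨h5,h6⟩ := hw3
  simp only [Set.mem_insert_iff, Set.mem_singleton_iff, Prod.mk.injEq] at hx
  rcases hx with ⟨a,b,c⟩|⟨a,b,c⟩|⟨a,b,c⟩|⟨a,b,c⟩|⟨a,b,c⟩ <;> subst a <;> subst b <;> subst c <;>
    nlinarith [mul_nonneg (mul_nonneg h1 h3) h5, mul_nonneg (mul_nonneg (sub_nonneg.2 h2) (sub_nonneg.2 h4)) (sub_nonneg.2 h6), mul_nonneg h1 h3, mul_nonneg h3 h5, mul_nonneg h1 h5, mul_nonneg (sub_nonneg.2 h2) (sub_nonneg.2 h4), mul_nonneg (sub_nonneg.2 h4) (sub_nonneg.2 h6), mul_nonneg (sub_nonneg.2 h2) (sub_nonneg.2 h6), mul_nonneg h1 (sub_nonneg.2 h4), mul_nonneg h3 (sub_nonneg.2 h6), mul_nonneg h5 (sub_nonneg.2 h2)]
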